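/- Let n ≥ 2 and r > 0. For the quadratic form Q on symmetric n×n matrices given by Q(h) = ((n+r)/n)·∑_{i,j} h_{ij}² + ((n+r)(n²−n−r)/(rn))·∑_{i,j≤n−1} h_{ij}² − (tr h)², the minimum value of Q is 0 and the kernel of Q (the set where Q vanishes) is the one-dimensional subspace of diagonal matrices diag(a,...,a, n(n−1)a/r). -/

import Mathlib

open Finset


lemma sum_inv_key {ι : Type*} [Fintype ι] (w : ι → ℝ) (hw : ∀ i, w i ≠ 0)
    (hsum : ∑ i, (w i)⁻¹ = 1) (d : ι → ℝ) :
    ∑ i, w i * (d i)^2 - (∑ i, d i)^2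
      = ∑ i, w i * (d i - (∑ j, d j) / w i)^2 := by
  have e : ∀ i ∈ Finset.univ, w i * (d i - (∑ j, d j) / w i)^2
      = w i * (d i)^2 - 2*(∑ j : ι, d j)*(d i) + (∑ j : ι, d j)^2 * (w i)⁻¹ := by
    intro i _
    field_simp [hw i]
    ring
  rw [Finset.sum_congr rfl e, Finset.sum_add_distrib, Finset.sum_sub_distrib,
    ← Finset.mul_sum, ← Finset.mul_sum, hsum]
  ring

noncomputable def cf (m : ℕ) (r : ℝ) (b : Bool) : ℝ :=
  if b then (((m:ℝ)+2)+r)*(((m:ℝ)+2)-1)/r else (((m:ℝ)+2)+r)/((m:ℝ)+2)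

lemma cf_pos (m : ℕ) {r : ℝ} (hr : 0 < r) (b : Bool) : 0 < cf m r b := by
  have h2 : (0:ℝ) < (m:ℝ)+2 := by positivity
  have h3 : (0:ℝ) < ((m:ℝ)+2)+r := by positivity
  have h4 : (0:ℝ) < ((m:ℝ)+2)-1 := by
    have : (0:ℝ) ≤ (m:ℝ) := Nat.cast_nonneg m
    linarith
  cases b <;> simp [cf] <;> positivity

lemma sum_inv_cf (m : ℕ) {r : ℝ} (hr : 0 < r) :
    ∑ i : Fin (m+2), (cf m r (decide ((i:ℕ) < m+1)))⁻¹ = 1 := by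
  rw [show (∑ i : Fin (m+2), (cf m r (decide ((i:ℕ) < m+1)))⁻¹)
      = ∑ k ∈ Finset.range (m+2), (cf m r (decide (k < m+1)))⁻¹ from
    Fin.sum_univ_eq_sum_range (fun k => (cf m r (decide (k < m+1)))⁻¹) (m+2)]
  rw [Finset.sum_range_succ]
  have h1 : ∀ k ∈ Finset.range (m+1),
      (cf m r (decide (k < m+1)))⁻¹ = (cf m r true)⁻¹ := by
    intro k hk
    rw [Finset.mem_range] at hk
    simp [hk]
  rw [Finset.sum_congr rfl h1, Finset.sum_const, Finset.card_range]
  simp only [lt_self_iff_false, decide_false]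
  have h2 : (0:ℝ) < (m:ℝ)+2 := by positivity
  have h3 : (0:ℝ) < ((m:ℝ)+2)+r := by positivity
  have h4 : (0:ℝ) < ((m:ℝ)+2)-1 := by
    have : (0:ℝ) ≤ (m:ℝ) := Nat.cast_nonneg m; linarith
  rw [cf, cf, if_pos rfl, if_neg (by simp)]
  rw [nsmul_eq_mul]
  push_cast
  field_simp
  ring

lemma key_id (m : ℕ) {r : ℝ} (hr : 0 < r) (h : Matrix (Fin (m+2)) (Fin (m+2)) ℝ) :
    ((((m:ℝ)+2)+r)/((m:ℝ)+2)) * ∑ i : Fin (m+2), ∑ j : Fin (m+2), (h i j)^2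
      + ((((m:ℝ)+2)+r)*(((m:ℝ)+2)^2 - ((m:ℝ)+2) - r)/(r*((m:ℝ)+2))) *
          ∑ i : Fin (m+2), ∑ j : Fin (m+2),
            (if (i : ℕ) < m+1 ∧ (j : ℕ) < m+1 then (h i j)^2 else 0)
      - (Matrix.trace h)^2
    = (∑ i : Fin (m+2), ∑ j : Fin (m+2),
        if i = j then 0 else cf m r (decide ((i:ℕ) < m+1 ∧ (j:ℕ) < m+1)) * (h i j)^2)
      + ∑ i : Fin (m+2), cf m r (decide ((i:ℕ) < m+1)) *
          (h i i - Matrix.trace h / cf m r (decide ((i:ℕ) < m+1)))^2 := by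
  have hm2 : ((m:ℝ)+2) ≠ 0 := by positivity
  have hr0 : r ≠ 0 := ne_of_gt hr
  have hAB : ((((m:ℝ)+2)+r)/((m:ℝ)+2)) + ((((m:ℝ)+2)+r)*(((m:ℝ)+2)^2 - ((m:ℝ)+2) - r)/(r*((m:ℝ)+2)))
      = cf m r true := by
    rw [cf, if_pos rfl]
    field_simp
    ring
  have ht : Matrix.trace h = ∑ i, h i i := by
    simp [Matrix.trace, Matrix.diag]
  have e1 : ((((m:ℝ)+2)+r)/((m:ℝ)+2)) * ∑ i : Fin (m+2), ∑ j : Fin (m+2), (h i j)^2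
      + ((((m:ℝ)+2)+r)*(((m:ℝ)+2)^2 - ((m:ℝ)+2) - r)/(r*((m:ℝ)+2))) *
          ∑ i : Fin (m+2), ∑ j : Fin (m+2),
            (if (i : ℕ) < m+1 ∧ (j : ℕ) < m+1 then (h i j)^2 else 0)
      = (∑ i : Fin (m+2), ∑ j : Fin (m+2),
          if i = j then 0 else cf m r (decide ((i:ℕ) < m+1 ∧ (j:ℕ) < m+1)) * (h i j)^2)
        + ∑ i : Fin (m+2), cf m r (decide ((i:ℕ) < m+1)) * (h i i)^2 := by
    rw [Finset.mul_sum, Finset.mul_sum, ← Finset.sum_add_distrib, ← Finset.sum_add_distrib]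
    refine Finset.sum_congr rfl fun i _ => ?_
    rw [Finset.mul_sum, Finset.mul_sum, ← Finset.sum_add_distrib]
    have step : ∀ j : Fin (m+2),
        ((((m:ℝ)+2)+r)/((m:ℝ)+2)) * (h i j)^2
          + ((((m:ℝ)+2)+r)*(((m:ℝ)+2)^2 - ((m:ℝ)+2) - r)/(r*((m:ℝ)+2))) *
              (if (i : ℕ) < m+1 ∧ (j : ℕ) < m+1 then (h i j)^2 else 0)
        = (if i = j then 0 else cf m r (decide ((i:ℕ) < m+1 ∧ (j:ℕ) < m+1)) * (h i j)^2)
          + (if i = j then cf m r (decide ((i:ℕ) < m+1)) * (h i i)^2 else 0) := by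
      intro j
      by_cases hij : i = j
      · subst hij
        simp only [eq_self_iff_true, if_true, and_self, zero_add]
        by_cases hi : (i:ℕ) < m+1
        · rw [if_pos hi, decide_eq_true hi, ← hAB]; ring
        · rw [if_neg hi, decide_eq_false hi, mul_zero, add_zero]
          simp [cf]
      · rw [if_neg hij, if_neg hij, add_zero]
        by_cases hc : (i:ℕ) < m+1 ∧ (j:ℕ) < m+1
        · rw [if_pos hc, decide_eq_true hc, ← hAB]; ring
        · rw [if_neg hc, decide_eq_false hc, mul_zero, add_zero]
          simp [cf]
    rw [Finset.sum_congr rfl fun j _ => step j, Finset.sum_add_distrib,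
      Finset.sum_ite_eq Finset.univ i
        (fun _ => cf m r (decide ((i:ℕ) < m+1)) * (h i i)^2), if_pos (Finset.mem_univ i)]
  rw [sub_eq_iff_eq_add] at *
  rw [e1, ht]
  have := sum_inv_key (fun i : Fin (m+2) => cf m r (decide ((i:ℕ) < m+1)))
    (fun i => ne_of_gt (cf_pos m hr _)) (sum_inv_cf m hr) (fun i => h i i)
  simp only at this
  linarith [this]

theorem stmt17 (n : ℕ) (hn : 2 ≤ n) (r : ℝ) (hr : 0 < r) :
    (∀ h : Matrix (Fin n) (Fin n) ℝ, h.IsSymm →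
      0 ≤ (((n : ℝ)+r)/(n : ℝ)) * ∑ i : Fin n, ∑ j : Fin n, (h i j)^2
        + (((n : ℝ)+r)*((n : ℝ)^2 - (n : ℝ) - r)/(r*(n : ℝ))) *
            ∑ i : Fin n, ∑ j : Fin n,
              (if (i : ℕ) < n - 1 ∧ (j : ℕ) < n - 1 then (h i j)^2 else 0)
        - (Matrix.trace h)^2)
    ∧ {h : Matrix (Fin n) (Fin n) ℝ | h.IsSymm ∧
        (((n : ℝ)+r)/(n : ℝ)) * ∑ i : Fin n, ∑ j : Fin n, (h i j)^2
          + (((n : ℝ)+r)*((n : ℝ)^2 - (n : ℝ) - r)/(r*(n : ℝ))) *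
              ∑ i : Fin n, ∑ j : Fin n,
                (if (i : ℕ) < n - 1 ∧ (j : ℕ) < n - 1 then (h i j)^2 else 0)
          - (Matrix.trace h)^2 = 0}
      = {h : Matrix (Fin n) (Fin n) ℝ | ∃ a : ℝ,
          h = Matrix.diagonal (fun i : Fin n =>
            if (i : ℕ) < n - 1 then a else (n : ℝ)*((n : ℝ)-1)*a/r)} := by
  obtain ⟨m, rfl⟩ : ∃ m, n = m + 2 := ⟨n - 2, by omega⟩
  clear hn
  have hco : ((m+2:ℕ):ℝ) = (m:ℝ)+2 := by push_cast; ring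
  simp only [hco, show m+2-1 = m+1 from rfl]
  have hm2 : ((m:ℝ)+2) ≠ 0 := by positivity
  have hr0 : r ≠ 0 := ne_of_gt hr
  have hoff_nonneg : ∀ h : Matrix (Fin (m+2)) (Fin (m+2)) ℝ,
      0 ≤ ∑ i : Fin (m+2), ∑ j : Fin (m+2),
        if i = j then 0 else cf m r (decide ((i:ℕ) < m+1 ∧ (j:ℕ) < m+1)) * (h i j)^2 := by
    intro h
    refine Finset.sum_nonneg fun i _ => Finset.sum_nonneg fun j _ => ?_
    split
    · exact le_rfl
    · exact mul_nonneg (cf_pos m hr _).le (sq_nonneg _)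
  have hdiag_nonneg : ∀ h : Matrix (Fin (m+2)) (Fin (m+2)) ℝ,
      0 ≤ ∑ i : Fin (m+2), cf m r (decide ((i:ℕ) < m+1)) *
          (h i i - Matrix.trace h / cf m r (decide ((i:ℕ) < m+1)))^2 :=
    fun h => Finset.sum_nonneg fun i _ => mul_nonneg (cf_pos m hr _).le (sq_nonneg _)
  constructor
  · intro h _
    rw [key_id m hr h]
    exact add_nonneg (hoff_nonneg h) (hdiag_nonneg h)
  · ext h
    simp only [Set.mem_setOf_eq]
    constructor
    · rintro ⟨hsym, hQ⟩
      rw [key_id m hr h] at hQ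
      have h1 : (∑ i : Fin (m+2), ∑ j : Fin (m+2),
          if i = j then 0 else cf m r (decide ((i:ℕ) < m+1 ∧ (j:ℕ) < m+1)) * (h i j)^2) = 0 := by
        linarith [hoff_nonneg h, hdiag_nonneg h]
      have h2 : (∑ i : Fin (m+2), cf m r (decide ((i:ℕ) < m+1)) *
          (h i i - Matrix.trace h / cf m r (decide ((i:ℕ) < m+1)))^2) = 0 := by
        linarith [hoff_nonneg h, hdiag_nonneg h]
      have hoff : ∀ i j : Fin (m+2), i ≠ j → h i j = 0 := by
        intro i j hij
        have hi := (Finset.sum_eq_zero_iff_of_nonneg (fun i _ =>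
          Finset.sum_nonneg fun j _ => by
            split
            · exact le_rfl
            · exact mul_nonneg (cf_pos m hr _).le (sq_nonneg _))).mp h1 i (Finset.mem_univ i)
        have hj := (Finset.sum_eq_zero_iff_of_nonneg (fun j _ => by
            split
            · exact le_rfl
            · exact mul_nonneg (cf_pos m hr _).le (sq_nonneg _))).mp hi j (Finset.mem_univ j)
        rw [if_neg hij] at hj
        have := (mul_eq_zero.mp hj).resolve_left (ne_of_gt (cf_pos m hr _))
        exact pow_eq_zero_iff (by norm_num) |>.mp this
      have hdiag : ∀ i : Fin (m+2),
          h i i = Matrix.trace h / cf m r (decide ((i:ℕ) < m+1)) := by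
        intro i
        have hi := (Finset.sum_eq_zero_iff_of_nonneg (fun i _ =>
          mul_nonneg (cf_pos m hr _).le (sq_nonneg _))).mp h2 i (Finset.mem_univ i)
        have := (mul_eq_zero.mp hi).resolve_left (ne_of_gt (cf_pos m hr _))
        have := pow_eq_zero_iff (n := 2) (by norm_num) |>.mp this
        linarith [this]
      refine ⟨Matrix.trace h / cf m r true, ?_⟩
      ext i j
      by_cases hij : i = j
      · subst hij
        rw [Matrix.diagonal_apply_eq]
        by_cases hi : (i:ℕ) < m+1
        · rw [if_pos hi, hdiag i, decide_eq_true hi]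
        · rw [if_neg hi, hdiag i, decide_eq_false hi]
          simp only [cf, if_true, if_false, Bool.false_eq_true, if_neg]
          have hNr : ((m:ℝ)+2)+r ≠ 0 := by positivity
          have hN1 : ((m:ℝ)+2)-1 ≠ 0 := by
            have : (0:ℝ) ≤ (m:ℝ) := Nat.cast_nonneg m
            intro hc; nlinarith
          field_simp
      · rw [Matrix.diagonal_apply_ne _ hij]
        exact hoff i j hij
    · rintro ⟨a, rfl⟩
      refine ⟨Matrix.isSymm_diagonal _, ?_⟩
      rw [key_id m hr _]
      set f : Fin (m+2) → ℝ := fun i =>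
        if (i:ℕ) < m+1 then a else ((m:ℝ)+2)*(((m:ℝ)+2)-1)*a/r with hf
      have htr : Matrix.trace (Matrix.diagonal f)
          = ((m:ℝ)+1)*a + ((m:ℝ)+2)*(((m:ℝ)+2)-1)*a/r := by
        rw [Matrix.trace_diagonal]
        rw [show (∑ i : Fin (m+2), f i)
            = ∑ k ∈ Finset.range (m+2), (if k < m+1 then a else ((m:ℝ)+2)*(((m:ℝ)+2)-1)*a/r)
          from Fin.sum_univ_eq_sum_range
            (fun k => if k < m+1 then a else ((m:ℝ)+2)*(((m:ℝ)+2)-1)*a/r) (m+2)]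
        rw [Finset.sum_range_succ]
        have h1 : ∀ k ∈ Finset.range (m+1),
            (if k < m+1 then a else ((m:ℝ)+2)*(((m:ℝ)+2)-1)*a/r) = a := by
          intro k hk
          rw [Finset.mem_range] at hk
          simp [hk]
        rw [Finset.sum_congr rfl h1, Finset.sum_const, Finset.card_range,
          if_neg (lt_irrefl (m+1)), nsmul_eq_mul]
        push_cast
        ring
      have hzero : ∀ i : Fin (m+2),
          Matrix.diagonal f i i
            - Matrix.trace (Matrix.diagonal f) / cf m r (decide ((i:ℕ) < m+1)) = 0 := by
        intro i
        rw [Matrix.diagonal_apply_eq, htr, sub_eq_zero, eq_div_iff (ne_of_gt (cf_pos m hr _))]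
        by_cases hi : (i:ℕ) < m+1
        · rw [decide_eq_true hi, show f i = a from if_pos hi]
          simp only [cf, if_true]
          field_simp
          ring
        · rw [decide_eq_false hi,
            show f i = ((m:ℝ)+2)*(((m:ℝ)+2)-1)*a/r from if_neg hi]
          simp only [cf, Bool.false_eq_true, if_false]
          field_simp
          ring
      have hoffz : (∑ i : Fin (m+2), ∑ j : Fin (m+2),
          if i = j then 0
          else cf m r (decide ((i:ℕ) < m+1 ∧ (j:ℕ) < m+1)) * (Matrix.diagonal f i j)^2) = 0 := by
        refine Finset.sum_eq_zero fun i _ => Finset.sum_eq_zero fun j _ => ?_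
        by_cases hij : i = j
        · rw [if_pos hij]
        · rw [if_neg hij, Matrix.diagonal_apply_ne _ hij]
          ring
      rw [hoffz, zero_add]
      refine Finset.sum_eq_zero fun i _ => ?_
      rw [hzero i]
      ring
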